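/- arXiv:1501.03201 — 4 statements merged into one kernel-verified Lean document; each statement's English description precedes it below -/
import Mathlib

section
/- Product formula for sinh: for all complex x, sinh(x/2) = (x/2)·∏_{k=1}^∞ (1 + (x/(2πk))²), where the infinite product converges. -/
open Filter Topology

/-- If one factor is zero, the product of complexes has product `0`. -/
lemma hasProd_zero_of_eq_zero {ι : Type*} {f : ι → ℂ} {i : ι} (h : f i = 0) :
    HasProd f 0 := by
  refine Tendsto.congr' ?_ tendsto_const_nhds
  filter_upwards [Filter.eventually_ge_atTop ({i} : Finset ι)] with s hs
  exact (Finset.prod_eq_zero (hs (Finset.mem_singleton_self i)) h).symm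

lemma sinh_prod_factor_multipliable (x : ℂ) :
    Multipliable (fun k : ℕ => 1 + (x / (2 * (Real.pi : ℂ) * ((k : ℂ) + 1))) ^ 2) := by
  set f : ℕ → ℂ := fun k => 1 + (x / (2 * (Real.pi : ℂ) * ((k : ℂ) + 1))) ^ 2 with hf
  by_cases hz : ∃ k, f k = 0
  · obtain ⟨k, hk⟩ := hz
    exact ⟨0, hasProd_zero_of_eq_zero hk⟩
  · push_neg at hz
    have hsum : Summable fun k : ℕ => ‖(x / (2 * (Real.pi : ℂ) * ((k : ℂ) + 1))) ^ 2‖ := by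
      have h1 : Summable fun k : ℕ => (1 : ℝ) / ((k : ℝ) + 1) ^ 2 := by
        have := (summable_nat_add_iff (f := fun n : ℕ => (1 : ℝ) / (n : ℝ) ^ 2) 1).2
          (Real.summable_one_div_nat_pow.2 one_lt_two)
        simpa using this
      have := h1.mul_left ((‖x‖ / (2 * Real.pi)) ^ 2)
      apply this.congr
      intro k
      have hk : (0:ℝ) < (k : ℝ) + 1 := by positivity
      rw [norm_pow, norm_div]
      rw [show (2 * (Real.pi : ℂ) * ((k : ℂ) + 1)) = ((2 * Real.pi * ((k:ℝ)+1) : ℝ) : ℂ) by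
        push_cast; ring]
      rw [Complex.norm_real, Real.norm_of_nonneg (by positivity), div_pow, div_pow, mul_pow,
        div_mul_div_comm, mul_one, mul_pow, mul_pow]
    have hlog : Summable fun k : ℕ => Complex.log (f k) := by
      have htend : Tendsto (fun k : ℕ => ‖(x / (2 * (Real.pi : ℂ) * ((k : ℂ) + 1))) ^ 2‖)
          atTop (𝓝 0) := hsum.tendsto_atTop_zero
      have hev : ∀ᶠ k : ℕ in atTop,
          ‖Complex.log (f k)‖ ≤ (3/2) * ‖(x / (2 * (Real.pi : ℂ) * ((k : ℂ) + 1))) ^ 2‖ := by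
        filter_upwards [htend.eventually_le_const (by norm_num : (0:ℝ) < 1/2)] with k hk
        exact Complex.norm_log_one_add_half_le_self hk
      exact Summable.of_norm_bounded_eventually (hsum.mul_left (3/2)) (Nat.cofinite_eq_atTop.symm ▸ hev)
    exact Complex.multipliable_of_summable_log hlog

/-- Product formula for `sinh`: for all complex `x`,
`sinh(x/2) = (x/2)·∏_{k=1}^∞ (1 + (x/(2πk))²)`, the infinite product converging. -/
theorem sinh_product (x : ℂ) :
    Multipliable (fun k : ℕ => 1 + (x / (2 * (Real.pi : ℂ) * ((k : ℂ) + 1))) ^ 2) ∧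
    Complex.sinh (x / 2)
      = (x / 2) * ∏' k : ℕ, (1 + (x / (2 * (Real.pi : ℂ) * ((k : ℂ) + 1))) ^ 2) := by
  have hM := sinh_prod_factor_multipliable x
  refine ⟨hM, ?_⟩
  set z : ℂ := x * Complex.I / (2 * Real.pi) with hz
  have hπ : (Real.pi : ℂ) ≠ 0 := Complex.ofReal_ne_zero.2 Real.pi_ne_zero
  have hπz : (Real.pi : ℂ) * z = x * Complex.I / 2 := by
    rw [hz]; field_simp
  have hfactor : ∀ k : ℕ, (1 : ℂ) - z ^ 2 / ((k : ℂ) + 1) ^ 2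
      = 1 + (x / (2 * (Real.pi : ℂ) * ((k : ℂ) + 1))) ^ 2 := by
    intro k
    have hk : ((k : ℂ) + 1) ≠ 0 := Nat.cast_add_one_ne_zero k
    rw [hz]
    field_simp
    ring_nf
    rw [Complex.I_sq]
    ring
  have h1 := Complex.tendsto_euler_sin_prod z
  have h2 : Tendsto (fun n : ℕ => (Real.pi : ℂ) * z *
      ∏ j ∈ Finset.range n, ((1 : ℂ) - z ^ 2 / ((j : ℂ) + 1) ^ 2)) atTop
      (𝓝 ((Real.pi : ℂ) * z * ∏' k : ℕ, (1 + (x / (2 * (Real.pi : ℂ) * ((k : ℂ) + 1))) ^ 2))) := by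
    have := (hM.hasProd.tendsto_prod_nat).const_mul ((Real.pi : ℂ) * z)
    apply this.congr
    intro n
    congr 1
    exact Finset.prod_congr rfl fun j _ => (hfactor j).symm
  have heq : Complex.sin ((Real.pi : ℂ) * z)
      = (Real.pi : ℂ) * z * ∏' k : ℕ, (1 + (x / (2 * (Real.pi : ℂ) * ((k : ℂ) + 1))) ^ 2) :=
    tendsto_nhds_unique h1 h2
  rw [hπz] at heq
  have hsin : Complex.sin (x * Complex.I / 2) = Complex.sinh (x / 2) * Complex.I := by
    rw [show x * Complex.I / 2 = (x / 2) * Complex.I by ring, Complex.sin_mul_I]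
  rw [hsin] at heq
  have hI : Complex.I ≠ 0 := Complex.I_ne_zero
  have h3 : Complex.sinh (x / 2) = Complex.sinh (x / 2) * Complex.I * (-Complex.I) := by
    rw [mul_assoc, mul_neg, Complex.I_mul_I]; ring
  rw [h3, heq]
  linear_combination (-(x / 2) *
    ∏' k : ℕ, (1 + (x / (2 * (Real.pi : ℂ) * ((k : ℂ) + 1))) ^ 2)) * Complex.I_sq
end

section
/- Product formula for cosh: for all complex x, cosh(x/2) = ∏_{k=1}^∞ (1 + (x/(2π(k-1/2)))²), where the infinite product converges. -/
open Filter Finset Complex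

open scoped Real Topology

namespace CoshProdAux

lemma pi_ne : ((Real.pi : ℝ) : ℂ) ≠ 0 := by exact_mod_cast Real.pi_ne_zero

lemma half_ne (k : ℕ) : ((k : ℂ) + 1 / 2) ≠ 0 := by
  have h : ((k : ℂ) + 1 / 2) = ((2 * k + 1 : ℕ) : ℂ) / 2 := by push_cast; ring
  rw [h]
  exact div_ne_zero (Nat.cast_ne_zero.mpr (by omega)) two_ne_zero

/-- odd numbers as complex numbers -/
noncomputable def cc (j : ℕ) : ℂ := 2 * (j : ℂ) + 1

lemma cc_ne (k : ℕ) : cc k ≠ 0 := by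
  have h : cc k = ((2 * k + 1 : ℕ) : ℂ) := by rw [cc]; push_cast; ring
  rw [h]
  exact Nat.cast_ne_zero.mpr (by omega)

/-- partial products of odd numbers -/
noncomputable def EE (n : ℕ) : ℂ := ∏ j ∈ range n, cc j

lemma EE_ne (n : ℕ) : EE n ≠ 0 := Finset.prod_ne_zero_iff.mpr fun j _ => cc_ne j

lemma EE_add (a b : ℕ) : EE (a + b) = EE a * ∏ i ∈ range b, cc (a + i) :=
  Finset.prod_range_add _ _ _

lemma summable_sq (x : ℂ) :
    Summable (fun k : ℕ => (x / (2 * (Real.pi : ℂ) * ((k : ℂ) + 1 / 2))) ^ 2) := by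
  apply Summable.of_norm
  have base : Summable (fun k : ℕ => (‖x‖ / (Real.pi * ((k : ℝ) + 1))) ^ 2) := by
    have b0 : Summable (fun n : ℕ => 1 / (n : ℝ) ^ 2) :=
      Real.summable_one_div_nat_pow.mpr one_lt_two
    have b1 : Summable (fun n : ℕ => 1 / ((n : ℝ) + 1) ^ 2) := by
      have := (summable_nat_add_iff 1).mpr b0
      refine this.congr fun n => ?_
      push_cast; ring
    refine (b1.mul_left ((‖x‖ / Real.pi) ^ 2)).congr fun n => ?_
    rw [div_pow, div_pow, mul_pow, div_mul_div_comm, mul_one]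
  refine Summable.of_nonneg_of_le (fun k => norm_nonneg _) (fun k => ?_) base
  have hden : (2 * (Real.pi : ℂ) * ((k : ℂ) + 1 / 2))
      = ((2 * Real.pi * ((k : ℝ) + 1 / 2) : ℝ) : ℂ) := by push_cast; ring
  rw [norm_pow, norm_div, hden, Complex.norm_real, Real.norm_eq_abs,
    abs_of_pos (by positivity)]
  have h3 : ‖x‖ / (2 * Real.pi * ((k : ℝ) + 1 / 2)) ≤ ‖x‖ / (Real.pi * ((k : ℝ) + 1)) :=
    div_le_div_of_nonneg_left (norm_nonneg x) (by positivity) (by nlinarith [Real.pi_pos])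
  exact pow_le_pow_left₀ (by positivity) h3 2

lemma mult (x : ℂ) :
    Multipliable (fun k : ℕ => 1 + (x / (2 * (Real.pi : ℂ) * ((k : ℂ) + 1 / 2))) ^ 2) := by
  set f : ℕ → ℂ := fun k => 1 + (x / (2 * (Real.pi : ℂ) * ((k : ℂ) + 1 / 2))) ^ 2 with hf
  by_cases h0 : ∃ m, f m = 0
  · obtain ⟨m, hm⟩ := h0
    refine ⟨0, ?_⟩
    have hev : ∀ᶠ s : Finset ℕ in atTop, ∏ i ∈ s, f i = 0 := by
      filter_upwards [eventually_ge_atTop ({m} : Finset ℕ)] with s hs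
      exact Finset.prod_eq_zero (hs (Finset.mem_singleton_self m)) hm
    exact Tendsto.congr' (by filter_upwards [hev] with s hs using hs.symm) tendsto_const_nhds
  · push_neg at h0
    have hlog : Summable (fun k => Complex.log (f k)) := by
      have h := (summable_sq x).neg.clog_one_sub
      refine h.congr fun k => ?_
      rw [sub_neg_eq_add]
    have h := hlog.hasSum.cexp
    refine HasProd.multipliable (a := Complex.exp (∑' k, Complex.log (f k))) ?_
    refine h.congr fun s => ?_
    exact Finset.prod_congr rfl fun i _ => Complex.exp_log (h0 i)

lemma split (w : ℂ) (n : ℕ) :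
    ∏ j ∈ range (2 * n), (1 - w ^ 2 / ((j : ℂ) + 1) ^ 2)
      = (∏ j ∈ range n, (1 - w ^ 2 / (2 * ((j : ℂ) + 1)) ^ 2)) *
          ∏ j ∈ range n, (1 - w ^ 2 / (2 * (j : ℂ) + 1) ^ 2) := by
  induction n with
  | zero => simp
  | succ n ih =>
    have h2 : 2 * (n + 1) = (2 * n) + 1 + 1 := by ring
    rw [h2, Finset.prod_range_succ, Finset.prod_range_succ, ih,
      Finset.prod_range_succ, Finset.prod_range_succ]
    push_cast
    ring

lemma cos_nat_pi (n : ℕ) : Complex.cos ((Real.pi : ℂ) * n) = (-1 : ℂ) ^ n := by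
  induction n with
  | zero => simp
  | succ n ih =>
    have h : (Real.pi : ℂ) * (n + 1 : ℕ) = (Real.pi : ℂ) * n + Real.pi := by push_cast; ring
    rw [h, Complex.cos_add_pi, ih]
    ring

/-- The key combinatorial limit: if `g j (2j+1)² = (2j+1-2K)(2j+1+2K)` then the
partial products of `g` tend to `(-1)^K`. -/
lemma tendsto_neg_one_pow (K : ℕ) (g : ℕ → ℂ)
    (hg : ∀ j : ℕ, g j * (cc j) ^ 2 = (cc j - 2 * K) * (cc j + 2 * K)) :
    Tendsto (fun n => ∏ j ∈ range n, g j) atTop (𝓝 ((-1 : ℂ) ^ K)) := by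
  have hQ : ∀ p : ℕ, ∏ j ∈ range (K + p), g j
      = (-1 : ℂ) ^ K * ∏ i ∈ range K, ((cc (p + i) + 2 * K) / cc (p + i)) := by
    intro p
    have hSne : (∏ i ∈ range K, cc (p + i)) ≠ 0 :=
      Finset.prod_ne_zero_iff.mpr fun j _ => cc_ne _
    have h1 : (∏ j ∈ range (K + p), g j) * (EE (K + p)) ^ 2
        = (∏ j ∈ range (K + p), (cc j - 2 * K)) *
          ∏ j ∈ range (K + p), (cc j + 2 * K) := by
      rw [EE, ← Finset.prod_pow, ← Finset.prod_mul_distrib, ← Finset.prod_mul_distrib]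
      exact Finset.prod_congr rfl fun j _ => hg j
    have hA : ∏ j ∈ range (K + p), (cc j - 2 * K) = (-1 : ℂ) ^ K * EE K * EE p := by
      rw [Finset.prod_range_add]
      have hA1 : ∏ j ∈ range K, (cc j - 2 * K) = (-1 : ℂ) ^ K * EE K := by
        have hrefl := Finset.prod_range_reflect (fun j => -(cc j)) K
        have hpt : ∏ j ∈ range K, (cc j - 2 * K)
            = ∏ j ∈ range K, -(cc (K - 1 - j)) := by
          refine Finset.prod_congr rfl fun j hj => ?_
          have hjK : j < K := Finset.mem_range.mp hj
          have hcast : ((K - 1 - j : ℕ) : ℂ) = (K : ℂ) - 1 - (j : ℂ) := by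
            have e1 : K - 1 - j = K - (j + 1) := by omega
            rw [e1, Nat.cast_sub (by omega)]
            push_cast; ring
          rw [cc, cc, hcast]
          ring
        rw [hpt, hrefl, EE]
        rw [show (∏ j ∈ range K, -(cc j)) = ∏ j ∈ range K, ((-1 : ℂ) * cc j) from
          Finset.prod_congr rfl fun j _ => by ring]
        rw [Finset.prod_mul_distrib, Finset.prod_const, Finset.card_range]
      have hA2 : ∏ i ∈ range p, (cc (K + i) - 2 * K) = EE p := by
        rw [EE]
        refine Finset.prod_congr rfl fun i _ => ?_
        rw [cc, cc]; push_cast; ring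
      rw [hA1, hA2]
    have hBsplit : EE K * ∏ j ∈ range (K + p), (cc j + 2 * K)
        = (EE p * ∏ i ∈ range K, cc (p + i)) * ∏ i ∈ range K, (cc (p + i) + 2 * K) := by
      have e1 : ∏ j ∈ range (K + p), (cc j + 2 * K)
          = (∏ j ∈ range p, (cc j + 2 * K)) * ∏ i ∈ range K, (cc (p + i) + 2 * K) := by
        rw [show K + p = p + K from Nat.add_comm K p, Finset.prod_range_add]
      have e2 : ∏ j ∈ range p, (cc j + 2 * K) = ∏ j ∈ range p, cc (K + j) := by
        refine Finset.prod_congr rfl fun j _ => ?_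
        rw [cc, cc]; push_cast; ring
      have e3 := EE_add K p
      calc EE K * ∏ j ∈ range (K + p), (cc j + 2 * K)
          = (EE K * ∏ j ∈ range p, cc (K + j)) * ∏ i ∈ range K, (cc (p + i) + 2 * K) := by
            rw [e1, e2]; ring
        _ = EE (K + p) * ∏ i ∈ range K, (cc (p + i) + 2 * K) := by rw [e3]
        _ = (EE p * ∏ i ∈ range K, cc (p + i)) * ∏ i ∈ range K, (cc (p + i) + 2 * K) := by
            rw [show K + p = p + K from Nat.add_comm K p, EE_add]
    have e4 : EE (K + p) = EE p * ∏ i ∈ range K, cc (p + i) := by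
      rw [show K + p = p + K from Nat.add_comm K p, EE_add]
    have hQS : (∏ j ∈ range (K + p), g j) * ∏ i ∈ range K, cc (p + i)
        = (-1 : ℂ) ^ K * ∏ i ∈ range K, (cc (p + i) + 2 * K) := by
      have hnz : (EE p) ^ 2 * (∏ i ∈ range K, cc (p + i)) * EE K ≠ 0 :=
        mul_ne_zero (mul_ne_zero (pow_ne_zero _ (EE_ne p)) hSne) (EE_ne K)
      apply mul_right_cancel₀ hnz
      calc (∏ j ∈ range (K + p), g j) * (∏ i ∈ range K, cc (p + i)) *
            ((EE p) ^ 2 * (∏ i ∈ range K, cc (p + i)) * EE K)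
          = ((∏ j ∈ range (K + p), g j) * (EE (K + p)) ^ 2) * EE K := by rw [e4]; ring
        _ = ((∏ j ∈ range (K + p), (cc j - 2 * K)) *
              ∏ j ∈ range (K + p), (cc j + 2 * K)) * EE K := by rw [h1]
        _ = ((-1 : ℂ) ^ K * EE p) * (EE K * ∏ j ∈ range (K + p), (cc j + 2 * K)) * EE K := by
            rw [hA]; ring
        _ = ((-1 : ℂ) ^ K * EE p) * ((EE p * ∏ i ∈ range K, cc (p + i)) *
              ∏ i ∈ range K, (cc (p + i) + 2 * K)) * EE K := by rw [hBsplit]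
        _ = (-1 : ℂ) ^ K * (∏ i ∈ range K, (cc (p + i) + 2 * K)) *
              ((EE p) ^ 2 * (∏ i ∈ range K, cc (p + i)) * EE K) := by ring
    rw [Finset.prod_div_distrib, ← mul_div_assoc, eq_div_iff hSne]
    linear_combination hQS
  have hfac : ∀ i : ℕ, Tendsto (fun p : ℕ => (cc (p + i) + 2 * K) / cc (p + i))
      atTop (𝓝 1) := by
    intro i
    have hre : ∀ p : ℕ, (cc (p + i) + 2 * K) / cc (p + i)
        = (((2 * ((p + i : ℕ) : ℝ) + 1 + 2 * K) / (2 * ((p + i : ℕ) : ℝ) + 1) : ℝ) : ℂ) := by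
      intro p
      rw [Complex.ofReal_div, cc]
      push_cast
      ring_nf
    have hd : Tendsto (fun p : ℕ => 2 * ((p + i : ℕ) : ℝ) + 1) atTop atTop := by
      apply tendsto_atTop_add_const_right
      apply Tendsto.const_mul_atTop two_pos
      exact tendsto_natCast_atTop_atTop.comp (tendsto_add_atTop_nat i)
    have h0 : Tendsto (fun p : ℕ => (2 * (K : ℝ)) / (2 * ((p + i : ℕ) : ℝ) + 1))
        atTop (𝓝 0) := Tendsto.div_atTop tendsto_const_nhds hd
    have hgre : Tendsto (fun p : ℕ => (2 * ((p + i : ℕ) : ℝ) + 1 + 2 * K)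
        / (2 * ((p + i : ℕ) : ℝ) + 1)) atTop (𝓝 1) := by
      have hsum := (tendsto_const_nhds : Tendsto (fun _ : ℕ => (1 : ℝ)) atTop (𝓝 1)).add h0
      rw [add_zero] at hsum
      refine hsum.congr fun p => ?_
      have hne : 2 * ((p + i : ℕ) : ℝ) + 1 ≠ 0 := by positivity
      field_simp
    have hcomp := (Complex.continuous_ofReal.tendsto 1).comp hgre
    refine hcomp.congr fun p => ?_
    rw [Function.comp_apply, ← hre]
  have hshift : Tendsto (fun p : ℕ => ∏ i ∈ range (p + K), g i) atTop
      (𝓝 ((-1 : ℂ) ^ K)) := by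
    have hlim : Tendsto (fun p : ℕ =>
        (-1 : ℂ) ^ K * ∏ i ∈ range K, ((cc (p + i) + 2 * K) / cc (p + i))) atTop
        (𝓝 ((-1 : ℂ) ^ K * ∏ i ∈ range K, (1 : ℂ))) :=
      Tendsto.const_mul _ (tendsto_finset_prod _ fun i _ => hfac i)
    rw [Finset.prod_const_one, mul_one] at hlim
    refine hlim.congr fun p => ?_
    rw [← hQ p, Nat.add_comm K p]
  exact (tendsto_add_atTop_iff_nat K).mp hshift

end CoshProdAux

open CoshProdAux

/-- Product formula for `cosh`: for all complex `x`,
`cosh(x/2) = ∏_{k=1}^∞ (1 + (x/(2π(k-1/2)))²)`, the infinite product converging. -/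
theorem cosh_product (x : ℂ) :
    Multipliable (fun k : ℕ => 1 + (x / (2 * (Real.pi : ℂ) * ((k : ℂ) + 1 / 2))) ^ 2) ∧
    Complex.cosh (x / 2)
      = ∏' k : ℕ, (1 + (x / (2 * (Real.pi : ℂ) * ((k : ℂ) + 1 / 2))) ^ 2) := by
  refine ⟨mult x, ?_⟩
  set f : ℕ → ℂ := fun k => 1 + (x / (2 * (Real.pi : ℂ) * ((k : ℂ) + 1 / 2))) ^ 2 with hf
  set L : ℂ := ∏' k : ℕ, f k with hLdef
  have hπ : ((Real.pi : ℝ) : ℂ) ≠ 0 := pi_ne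
  have hL : Tendsto (fun n => ∏ i ∈ range n, f i) atTop (𝓝 L) :=
    (mult x).hasProd.tendsto_prod_nat
  have hfj : ∀ j : ℕ, f j = 1 + x ^ 2 / (2 * (Real.pi : ℂ) * ((j : ℂ) + 1 / 2)) ^ 2 := by
    intro j; simp only [hf, div_pow]
  by_cases hs0 : Complex.sin (x / 2 * I) = 0
  · -- degenerate case : x = 2πim for an integer m
    obtain ⟨k, hk⟩ := Complex.sin_eq_zero_iff.mp hs0
    obtain ⟨m, hx⟩ : ∃ m : ℤ, x = 2 * (Real.pi : ℂ) * I * (m : ℂ) := by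
      refine ⟨-k, ?_⟩
      have h1 : x * I = 2 * (k : ℂ) * Real.pi := by linear_combination 2 * hk
      push_cast
      linear_combination (-I) * h1 + x * Complex.I_sq
    obtain ⟨K, hmK⟩ : ∃ K : ℕ, (m : ℂ) = (K : ℂ) ∨ (m : ℂ) = -(K : ℂ) := by
      refine ⟨m.natAbs, ?_⟩
      rcases Int.natAbs_eq m with h | h
      · left
        have h2 : (m : ℂ) = ((m.natAbs : ℤ) : ℂ) := congrArg _ h
        rw [h2]; push_cast; rw [Int.abs_eq_natAbs, Int.cast_natCast]
      · right
        have h2 : (m : ℂ) = ((-(m.natAbs : ℤ) : ℤ) : ℂ) := congrArg _ h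
        rw [h2]; push_cast; rw [Int.abs_eq_natAbs, Int.cast_natCast]
    have hm2 : ((m : ℂ)) ^ 2 = ((K : ℂ)) ^ 2 := by
      rcases hmK with h | h <;> rw [h] <;> ring
    have hcosh : Complex.cosh (x / 2) = (-1 : ℂ) ^ K := by
      have hx2 : x / 2 = ((Real.pi : ℂ) * m) * I := by rw [hx]; ring
      rw [hx2, Complex.cosh_mul_I]
      rcases hmK with h | h
      · rw [h]; exact cos_nat_pi K
      · rw [h, show (Real.pi : ℂ) * (-(K : ℂ)) = -((Real.pi : ℂ) * K) from by ring,
          Complex.cos_neg]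
        exact cos_nat_pi K
    have hx2 : x ^ 2 = -(2 * (K : ℂ)) ^ 2 * (Real.pi : ℂ) ^ 2 := by
      rw [hx]
      linear_combination (4 * ((Real.pi : ℂ)) ^ 2 * (m : ℂ) ^ 2) * Complex.I_sq
        - 4 * ((Real.pi : ℂ)) ^ 2 * hm2
    have hterm : ∀ j : ℕ, f j * (cc j) ^ 2 = (cc j - 2 * K) * (cc j + 2 * K) := by
      intro j
      have hj : ((j : ℂ) + 1 / 2) ≠ 0 := half_ne j
      have hden : (2 * (Real.pi : ℂ) * ((j : ℂ) + 1 / 2)) ^ 2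
          = (Real.pi : ℂ) ^ 2 * (cc j) ^ 2 := by rw [cc]; ring
      have hne : ((Real.pi : ℂ) ^ 2 * (cc j) ^ 2) ≠ 0 :=
        mul_ne_zero (pow_ne_zero _ hπ) (pow_ne_zero _ (cc_ne j))
      have hcc : cc j ≠ 0 := cc_ne j
      rw [hfj j, hx2, hden]
      field_simp
      ring
    have hQt : Tendsto (fun n => ∏ i ∈ range n, f i) atTop (𝓝 ((-1 : ℂ) ^ K)) :=
      tendsto_neg_one_pow K f hterm
    have hLK : L = (-1 : ℂ) ^ K := tendsto_nhds_unique hL hQt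
    rw [hcosh, hLK]
  · -- generic case : sin (x/2 * I) ≠ 0
    set z : ℂ := x * I / (2 * Real.pi) with hz
    have hA := Complex.tendsto_euler_sin_prod z
    have h2n : Tendsto (fun n : ℕ => 2 * n) atTop atTop :=
      tendsto_atTop_atTop_of_monotone (fun a b h => by omega) (fun b => ⟨b, by omega⟩)
    have hB := (Complex.tendsto_euler_sin_prod (2 * z)).comp h2n
    have heven : ∀ j : ℕ, (1 - (2 * z) ^ 2 / (2 * ((j : ℂ) + 1)) ^ 2)
        = 1 - z ^ 2 / ((j : ℂ) + 1) ^ 2 := by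
      intro j
      have hj : ((j : ℂ) + 1) ≠ 0 := Nat.cast_add_one_ne_zero j
      field_simp
    have hodd : ∀ j : ℕ, (1 - (2 * z) ^ 2 / (2 * (j : ℂ) + 1) ^ 2) = f j := by
      intro j
      have hj : ((j : ℂ) + 1 / 2) ≠ 0 := half_ne j
      have hcj : (2 * (j : ℂ) + 1) ≠ 0 := by
        have := cc_ne j; rwa [cc] at this
      have hz2 : (2 * z) ^ 2 = -x ^ 2 / (Real.pi : ℂ) ^ 2 := by
        have e1 : 2 * z = x * I / Real.pi := by rw [hz]; field_simp
        rw [e1, div_pow, mul_pow, Complex.I_sq]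
        ring
      have hden : (2 * (Real.pi : ℂ) * ((j : ℂ) + 1 / 2)) ^ 2
          = (Real.pi : ℂ) ^ 2 * (2 * (j : ℂ) + 1) ^ 2 := by ring
      rw [hfj j, hz2, hden]
      field_simp
      ring
    have hBmod : Tendsto (fun n : ℕ =>
        2 * (((Real.pi : ℂ) * z * ∏ j ∈ range n, (1 - z ^ 2 / ((j : ℂ) + 1) ^ 2)) *
          ∏ i ∈ range n, f i)) atTop (𝓝 (Complex.sin ((Real.pi : ℂ) * (2 * z)))) := by
      refine hB.congr fun n => ?_
      rw [Function.comp_apply, split (2 * z) n]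
      rw [Finset.prod_congr rfl fun j _ => heven j, Finset.prod_congr rfl fun j _ => hodd j]
      ring
    have hAQ : Tendsto (fun n : ℕ =>
        2 * (((Real.pi : ℂ) * z * ∏ j ∈ range n, (1 - z ^ 2 / ((j : ℂ) + 1) ^ 2)) *
          ∏ i ∈ range n, f i)) atTop (𝓝 (2 * (Complex.sin ((Real.pi : ℂ) * z) * L))) :=
      (hA.mul hL).const_mul 2
    have huniq : Complex.sin ((Real.pi : ℂ) * (2 * z))
        = 2 * (Complex.sin ((Real.pi : ℂ) * z) * L) := tendsto_nhds_unique hBmod hAQ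
    have hpz : (Real.pi : ℂ) * z = x / 2 * I := by rw [hz]; field_simp
    have hp2z : (Real.pi : ℂ) * (2 * z) = 2 * (x / 2 * I) := by rw [hz]; field_simp
    rw [hp2z, Complex.sin_two_mul, hpz] at huniq
    have h2s : (2 : ℂ) * Complex.sin (x / 2 * I) ≠ 0 := mul_ne_zero two_ne_zero hs0
    have hfin : Complex.cos (x / 2 * I) = L := by
      apply mul_left_cancel₀ h2s
      linear_combination huniq
    rw [← Complex.cos_mul_I]
    exact hfin
end

section
/- For real x with |x| < 2π, sinh(x/2)/(x/2) = exp( -Σ_{k=1}^∞ x^{2k}/(2k(2πi)^{2k}) · 2ζ(2k) ), where ζ is the Riemann zeta function. Equivalently, log(sinh(x/2)/(x/2)) = Σ_{k=1}^∞ (-1)^{k+1} ζ(2k) x^{2k} / (k (2π)^{2k}). -/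
open Filter Topology

private lemma aux_summable_inv_sq : Summable (fun n : ℕ => 1 / ((n : ℝ) + 1) ^ 2) := by
  have := (summable_nat_add_iff (f := fun n : ℕ => 1 / (n : ℝ) ^ 2) 1).mpr
    (by simpa using Real.summable_one_div_nat_pow.mpr one_lt_two)
  refine this.congr fun n => by push_cast; ring_nf

/-- HasSum of log(1+c) series. -/
private lemma aux_log_series {c : ℝ} (hc0 : 0 ≤ c) (hc1 : c < 1) :
    HasSum (fun k : ℕ => (-1 : ℝ) ^ k * c ^ (k + 1) / (k + 1)) (Real.log (1 + c)) := by
  have h := Real.hasSum_pow_div_log_of_abs_lt_one (x := -c) (by rwa [abs_neg, abs_of_nonneg hc0])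
  rw [sub_neg_eq_add] at h
  have h2 := h.neg
  rw [neg_neg] at h2
  refine h2.congr_fun fun k => ?_
  rw [neg_pow]
  push_cast
  ring

/-- For real `x` with `|x| < 2π`,
`log(sinh(x/2)/(x/2)) = Σ_{k=1}^∞ (-1)^{k+1} ζ(2k) x^{2k} / (k(2π)^{2k})`,
equivalently `sinh(x/2)/(x/2) = exp(-Σ_{k=1}^∞ x^{2k}/(2k(2πi)^{2k})·2ζ(2k))`,
where `ζ(2k) = Σ_{n=1}^∞ n^{-2k}` is the Riemann zeta function. -/
theorem log_sinh_div (x : ℝ) (hx : |x| < 2 * Real.pi) :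
    Real.log (Real.sinh (x / 2) / (x / 2))
      = ∑' k : ℕ, (-1 : ℝ) ^ k * (∑' n : ℕ, 1 / ((n : ℝ) + 1) ^ (2 * (k + 1)))
          * x ^ (2 * (k + 1)) / ((k + 1) * (2 * Real.pi) ^ (2 * (k + 1))) := by
  have pi_pos := Real.pi_pos
  rcases eq_or_ne x 0 with rfl | hx0
  · simp
  -- basic bounds
  have h2pi : (0:ℝ) < 2 * Real.pi := by linarith
  have hx2 : x ^ 2 < (2 * Real.pi) ^ 2 := by
    have := sq_abs x
    nlinarith [abs_nonneg x]
  set r : ℝ := x ^ 2 / (2 * Real.pi) ^ 2 with hr_def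
  have hr0 : 0 < r := div_pos (by positivity) (by positivity)
  have hr1 : r < 1 := (div_lt_one (by positivity)).mpr hx2
  -- c n
  set c : ℕ → ℝ := fun n => x ^ 2 / (2 * Real.pi * ((n : ℝ) + 1)) ^ 2 with hc_def
  have hc_pos : ∀ n, 0 < c n := fun n => div_pos (by positivity) (by positivity)
  have hc_le : ∀ n : ℕ, c n ≤ r := by
    intro n
    have h1 : (2 * Real.pi) ^ 2 ≤ (2 * Real.pi * ((n:ℝ) + 1)) ^ 2 := by
      nlinarith [Real.pi_pos, Nat.cast_nonneg (α := ℝ) n, sq_nonneg (n:ℝ)]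
    exact div_le_div_of_nonneg_left (by positivity) (by positivity) h1
  have hc_lt1 : ∀ n, c n < 1 := fun n => lt_of_le_of_lt (hc_le n) hr1
  -- the double-indexed family
  set f : ℕ → ℕ → ℝ := fun k n => (-1 : ℝ) ^ k * c n ^ (k + 1) / (k + 1) with hf_def
  -- summability of the uncurried family
  have habs : ∀ k n, |f k n| ≤ r ^ k * c n := by
    intro k n
    have h1 : |f k n| = c n ^ (k + 1) / (k + 1) := by
      rw [hf_def, abs_div, abs_mul, abs_pow, abs_neg, abs_one, one_pow, one_mul,
        abs_of_nonneg (pow_nonneg (hc_pos n).le _), abs_of_nonneg (by positivity)]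
    rw [h1, pow_succ]
    calc c n ^ k * c n / (k + 1) ≤ c n ^ k * c n / 1 := by
          apply div_le_div_of_nonneg_left (by positivity) one_pos (by push_cast; linarith)
      _ = c n ^ k * c n := by ring
      _ ≤ r ^ k * c n := by
          apply mul_le_mul_of_nonneg_right _ (hc_pos n).le
          exact pow_le_pow_left₀ (hc_pos n).le (hc_le n) k
  have hsum_c : Summable c := by
    have : Summable (fun n : ℕ => x ^ 2 / (2 * Real.pi) ^ 2 * (1 / ((n : ℝ) + 1) ^ 2)) :=
      aux_summable_inv_sq.mul_left _
    refine this.congr fun n => ?_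
    rw [hc_def]; field_simp
  have hsum_unc : Summable (Function.uncurry f) := by
    have hg : Summable (fun p : ℕ × ℕ => r ^ p.1 * c p.2) :=
      Summable.mul_of_nonneg (summable_geometric_of_lt_one hr0.le hr1) hsum_c
        (fun k => by positivity) (fun n => (hc_pos n).le)
    refine Summable.of_abs (hg.of_nonneg_of_le (fun p => abs_nonneg _) fun p => habs p.1 p.2)
  -- inner sum over k equals log(1 + c n)
  have hinner : ∀ n, HasSum (fun k => f k n) (Real.log (1 + c n)) :=
    fun n => aux_log_series (hc_pos n).le (hc_lt1 n)
  -- Euler product for sinh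
  have hprod : Tendsto (fun N : ℕ => ∏ j ∈ Finset.range N, (1 + c j)) atTop
      (𝓝 (Real.sinh (x / 2) / (x / 2))) := by
    have h := Complex.tendsto_euler_sin_prod (x / (2 * Real.pi) * Complex.I)
    have key : ∀ N : ℕ, (Real.pi * (x / (2 * Real.pi) * Complex.I) *
        ∏ j ∈ Finset.range N, (1 - (x / (2 * Real.pi) * Complex.I) ^ 2 / ((j : ℂ) + 1) ^ 2))
        = ((x / 2 * ∏ j ∈ Finset.range N, (1 + c j) : ℝ) : ℂ) * Complex.I := by
      intro N
      have : ∀ j : ℕ, (1 - (x / (2 * Real.pi) * Complex.I) ^ 2 / ((j : ℂ) + 1) ^ 2)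
          = ((1 + c j : ℝ) : ℂ) := by
        intro j
        have hj1 : ((j : ℂ) + 1) ≠ 0 := Nat.cast_add_one_ne_zero j
        have hpi : (Real.pi : ℂ) ≠ 0 := by exact_mod_cast Real.pi_ne_zero
        rw [mul_pow, Complex.I_sq, mul_neg_one, neg_div, sub_neg_eq_add, hc_def]
        push_cast
        field_simp
      rw [Finset.prod_congr rfl (fun j _ => this j)]
      push_cast [← Complex.ofReal_prod]
      have hpi : (Real.pi : ℂ) ≠ 0 := by exact_mod_cast Real.pi_ne_zero
      field_simp
      simp [Complex.ofReal_prod]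
    rw [funext key] at h
    have hsin : Complex.sin (Real.pi * (x / (2 * Real.pi) * Complex.I))
        = ((Real.sinh (x / 2) : ℝ) : ℂ) * Complex.I := by
      have : (Real.pi : ℂ) * (x / (2 * Real.pi) * Complex.I) = (x / 2 : ℝ) * Complex.I := by
        have hpi : (Real.pi : ℂ) ≠ 0 := by exact_mod_cast Real.pi_ne_zero
        push_cast
        field_simp
      rw [this, Complex.sin_mul_I, Complex.ofReal_sinh]
    rw [hsin] at h
    have him := (Complex.continuous_im.tendsto _).comp h
    simp only [Function.comp_def, Complex.mul_I_im, Complex.ofReal_re] at him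
    have hx2ne : x / 2 ≠ 0 := by simpa using hx0
    have := him.div_const (x / 2)
    refine this.congr fun N => ?_
    field_simp
  -- log of product: HasSum of logs
  have hlog_sum : HasSum (fun n => Real.log (1 + c n)) (Real.log (Real.sinh (x / 2) / (x / 2))) := by
    have hsumlog : Summable (fun n => Real.log (1 + c n)) := by
      refine hsum_c.of_nonneg_of_le (fun n => Real.log_nonneg (by linarith [hc_pos n])) fun n => ?_
      have := Real.log_le_sub_one_of_pos (x := 1 + c n) (by linarith [hc_pos n])
      linarith
    rw [hsumlog.hasSum_iff_tendsto_nat]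
    have hcont : Tendsto Real.log (𝓝 (Real.sinh (x / 2) / (x / 2)))
        (𝓝 (Real.log (Real.sinh (x / 2) / (x / 2)))) := by
      apply Real.continuousAt_log _ |>.tendsto
      rcases lt_or_gt_of_ne hx0 with h | h
      · have h2 : x / 2 < 0 := by linarith
        have h3 : Real.sinh (x / 2) < 0 := Real.sinh_neg_iff.mpr h2
        exact (div_pos_iff.mpr (Or.inr ⟨h3, h2⟩)).ne'
      · have h2 : 0 < x / 2 := by linarith
        exact (div_pos (Real.sinh_pos_iff.mpr h2) h2).ne'
    refine (hcont.comp hprod).congr fun N => ?_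
    rw [Function.comp_apply, Real.log_prod]
    exact fun j _ => by linarith [hc_pos j]
  -- now assemble
  -- RHS term k equals ∑' n, f k n
  have hterm : ∀ k : ℕ, (-1 : ℝ) ^ k * (∑' n : ℕ, 1 / ((n : ℝ) + 1) ^ (2 * (k + 1)))
      * x ^ (2 * (k + 1)) / ((k + 1) * (2 * Real.pi) ^ (2 * (k + 1))) = ∑' n, f k n := by
    intro k
    have hfkn : ∀ n : ℕ, f k n = (1 / ((n : ℝ) + 1) ^ (2 * (k + 1)))
        * ((-1 : ℝ) ^ k * x ^ (2 * (k + 1)) / ((k + 1) * (2 * Real.pi) ^ (2 * (k + 1)))) := by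
      intro n
      have hn1 : ((n : ℝ) + 1) ≠ 0 := by positivity
      have hk1 : ((k : ℝ) + 1) ≠ 0 := by positivity
      have hpi2 : (2 * Real.pi) ≠ 0 := by positivity
      simp only [hf_def, hc_def]
      rw [div_pow, ← pow_mul, ← pow_mul, mul_pow]
      field_simp
    rw [tsum_congr hfkn, tsum_mul_right]
    ring
  rw [tsum_congr hterm]
  -- swap
  have hswap : ∑' k, ∑' n, f k n = ∑' n, ∑' k, f k n := (hsum_unc.tsum_comm).symm
  rw [hswap]
  have : ∀ n, ∑' k, f k n = Real.log (1 + c n) := fun n => (hinner n).tsum_eq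
  rw [tsum_congr this, hlog_sum.tsum_eq]
end

section
/- For real x with |x| < π, cosh(x/2) = exp( -Σ_{k=1}^∞ x^{2k}/(2k(2πi)^{2k}) · 2 Σ_{n=1}^∞ (n-1/2)^{-2k} ). Equivalently, log cosh(x/2) = Σ_{k=1}^∞ (-1)^{k+1} λ(2k) x^{2k} / (k (2π)^{2k}) where λ(s) = Σ_{n=1}^∞ (n-1/2)^{-s}. -/
open Filter Finset Topology

private lemma lc_prod_split (f : ℕ → ℝ) (n : ℕ) :
    ∏ j ∈ Finset.range (2 * n), f j
      = (∏ j ∈ Finset.range n, f (2 * j)) * ∏ j ∈ Finset.range n, f (2 * j + 1) := by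
  induction n with
  | zero => simp
  | succ n ih =>
      have h : 2 * (n + 1) = (2 * n + 1) + 1 := by ring
      rw [h, Finset.prod_range_succ, Finset.prod_range_succ, Finset.prod_range_succ,
        Finset.prod_range_succ, ih]
      ring

private lemma lc_sinh_prod (t : ℝ) :
    Tendsto (fun n : ℕ => t * ∏ j ∈ Finset.range n,
        (1 + t ^ 2 / (Real.pi ^ 2 * ((j : ℝ) + 1) ^ 2)))
      atTop (𝓝 (Real.sinh t)) := by
  have h := Complex.tendsto_euler_sin_prod (t * Complex.I / Real.pi)
  have h2 := (Complex.continuous_im.tendsto _).comp h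
  have hπ : (Real.pi : ℂ) ≠ 0 := by
    exact_mod_cast Real.pi_ne_zero
  convert h2 using 1
  · funext n
    simp only [Function.comp_apply]
    have hz : (Real.pi : ℂ) * ((t : ℂ) * Complex.I / (Real.pi : ℂ)) = (t : ℂ) * Complex.I := by
      field_simp
    rw [hz]
    have hprod : ∏ j ∈ Finset.range n,
        ((1 : ℂ) - ((t : ℂ) * Complex.I / (Real.pi : ℂ)) ^ 2 / ((j : ℂ) + 1) ^ 2)
        = ((∏ j ∈ Finset.range n, (1 + t ^ 2 / (Real.pi ^ 2 * ((j : ℝ) + 1) ^ 2)) : ℝ) : ℂ) := by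
      push_cast
      refine Finset.prod_congr rfl fun j _ => ?_
      have : ((t : ℂ) * Complex.I / (Real.pi : ℂ)) ^ 2 = -(t : ℂ) ^ 2 / (Real.pi : ℂ) ^ 2 := by
        rw [div_pow, mul_pow, Complex.I_sq]
        ring
      rw [this]
      field_simp
      ring
    rw [hprod]
    generalize (∏ j ∈ Finset.range n, (1 + t ^ 2 / (Real.pi ^ 2 * ((j : ℝ) + 1) ^ 2)) : ℝ) = r
    simp [Complex.mul_im]
  · have hz : (Real.pi : ℂ) * ((t : ℂ) * Complex.I / (Real.pi : ℂ)) = (t : ℂ) * Complex.I := by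
      field_simp
    rw [hz, Complex.sin_mul_I]
    simp [← Complex.ofReal_sinh]

private lemma lc_cosh_prod (x : ℝ) :
    Tendsto (fun n : ℕ => ∏ j ∈ Finset.range n,
        (1 + x ^ 2 / (Real.pi ^ 2 * (2 * (j : ℝ) + 1) ^ 2)))
      atTop (𝓝 (Real.cosh (x / 2))) := by
  rcases eq_or_ne x 0 with rfl | hx
  · simpa using (tendsto_const_nhds : Tendsto (fun _ : ℕ => (1:ℝ)) atTop (𝓝 1))
  · set f : ℕ → ℝ := fun j => 1 + x ^ 2 / (Real.pi ^ 2 * ((j : ℝ) + 1) ^ 2) with hf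
    set g : ℕ → ℝ := fun j => 1 + (x / 2) ^ 2 / (Real.pi ^ 2 * ((j : ℝ) + 1) ^ 2) with hg
    have hgpos : ∀ n, (0:ℝ) < ∏ j ∈ Finset.range n, g j := by
      intro n
      refine Finset.prod_pos fun j _ => ?_
      simp only [hg]
      positivity
    have h2n : Tendsto (fun n : ℕ => x * ∏ j ∈ Finset.range (2 * n), f j) atTop
        (𝓝 (Real.sinh x)) := by
      refine (lc_sinh_prod x).comp ?_
      exact Filter.tendsto_atTop_atTop.mpr fun b => ⟨b, fun a ha => by omega⟩
    have hden : Tendsto (fun n : ℕ => 2 * ((x / 2) * ∏ j ∈ Finset.range n, g j)) atTop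
        (𝓝 (2 * Real.sinh (x / 2))) := (lc_sinh_prod (x / 2)).const_mul 2
    have hsne : Real.sinh (x / 2) ≠ 0 := Real.sinh_ne_zero.mpr (by simpa using hx)
    have hne : (2 : ℝ) * Real.sinh (x / 2) ≠ 0 := by positivity
    have key : ∀ n, ∏ j ∈ Finset.range n, (1 + x ^ 2 / (Real.pi ^ 2 * (2 * (j : ℝ) + 1) ^ 2))
        = (x * ∏ j ∈ Finset.range (2 * n), f j) / (2 * ((x / 2) * ∏ j ∈ Finset.range n, g j)) := by
      intro n
      rw [lc_prod_split f n]
      have he : ∀ j ∈ Finset.range n, f (2 * j + 1) = g j := by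
        intro j _
        simp only [hf, hg]
        have hπ := Real.pi_ne_zero
        have hj : ((j:ℝ) + 1) ≠ 0 := by positivity
        push_cast
        field_simp
        ring
      have ho : ∀ j ∈ Finset.range n, f (2 * j)
          = 1 + x ^ 2 / (Real.pi ^ 2 * (2 * (j : ℝ) + 1) ^ 2) := by
        intro j _
        simp only [hf]
        push_cast
        ring_nf
      rw [Finset.prod_congr rfl he, Finset.prod_congr rfl ho]
      have := (hgpos n).ne'
      field_simp
    have hfinal := (h2n.div hden hne).congr fun n => (key n).symm
    have hcosh : Real.cosh (x / 2) = Real.sinh x / (2 * Real.sinh (x / 2)) := by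
      have h := Real.sinh_two_mul (x / 2)
      rw [show 2 * (x / 2) = x by ring] at h
      rw [h]
      field_simp
    rw [hcosh]
    exact hfinal

/-- For real `x` with `|x| < π`,
`log cosh(x/2) = Σ_{k=1}^∞ (-1)^{k+1} λ(2k) x^{2k} / (k(2π)^{2k})` where
`λ(2k) = Σ_{n=1}^∞ (n-1/2)^{-2k}`; equivalently
`cosh(x/2) = exp(-Σ_{k=1}^∞ x^{2k}/(2k(2πi)^{2k})·2λ(2k))`. -/
theorem log_cosh (x : ℝ) (hx : |x| < Real.pi) :
    Real.log (Real.cosh (x / 2))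
      = ∑' k : ℕ, (-1 : ℝ) ^ k * (∑' n : ℕ, 1 / ((n : ℝ) + 1 / 2) ^ (2 * (k + 1)))
          * x ^ (2 * (k + 1)) / ((k + 1) * (2 * Real.pi) ^ (2 * (k + 1))) := by
  have hπ : (0:ℝ) < Real.pi := Real.pi_pos
  set a : ℕ → ℝ := fun j => x ^ 2 / (Real.pi ^ 2 * (2 * (j : ℝ) + 1) ^ 2) with ha
  have ha0 : ∀ j, 0 ≤ a j := fun j => by simp only [ha]; positivity
  have hxsq : x ^ 2 < Real.pi ^ 2 := by
    have := abs_nonneg x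
    calc x ^ 2 = |x| ^ 2 := (sq_abs x).symm
    _ < Real.pi ^ 2 := by nlinarith
  have ha1 : ∀ j, a j < 1 := by
    intro j
    simp only [ha]
    rw [div_lt_one (by positivity)]
    have h1 : (1:ℝ) ≤ (2 * (j : ℝ) + 1) ^ 2 := by nlinarith [Nat.cast_nonneg (α := ℝ) j]
    nlinarith
  have haj0 : ∀ j, a j ≤ a 0 := by
    intro j
    simp only [ha]
    apply div_le_div_of_nonneg_left (by positivity) (by positivity)
    push_cast
    nlinarith [Nat.cast_nonneg (α := ℝ) j, sq_nonneg ((j:ℝ))]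
  have hsuma : Summable a := by
    have hbase : Summable (fun j : ℕ => x ^ 2 / Real.pi ^ 2 * (1 / ((j : ℝ) + 1) ^ 2)) := by
      apply Summable.mul_left
      have := Real.summable_one_div_nat_pow.mpr (le_refl 2)
      exact_mod_cast (summable_nat_add_iff 1).mpr this
    refine Summable.of_nonneg_of_le ha0 (fun j => ?_) hbase
    simp only [ha]
    rw [show x ^ 2 / Real.pi ^ 2 * (1 / ((j:ℝ) + 1) ^ 2) = x ^ 2 / (Real.pi ^ 2 * ((j:ℝ)+1) ^ 2) by
      have h1 := Real.pi_ne_zero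
      have h2 : ((j:ℝ) + 1) ≠ 0 := by positivity
      field_simp]
    exact div_le_div_of_nonneg_left (by positivity) (by positivity)
      (by nlinarith [mul_nonneg (sq_nonneg Real.pi) (Nat.cast_nonneg (α := ℝ) j),
        mul_nonneg (sq_nonneg Real.pi) (sq_nonneg ((j:ℝ)))])
  have hlogser : ∀ j, HasSum (fun k : ℕ => (-1:ℝ) ^ k * a j ^ (k+1) / ((k:ℝ)+1))
      (Real.log (1 + a j)) := by
    intro j
    have h : |(-(a j))| < 1 := by rw [abs_neg, abs_of_nonneg (ha0 j)]; exact ha1 j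
    have h2 := (Real.hasSum_pow_div_log_of_abs_lt_one h).neg
    rw [sub_neg_eq_add, neg_neg] at h2
    have heq : (fun n : ℕ => -((-a j) ^ (n+1) / ((n:ℝ)+1)))
        = fun k : ℕ => (-1:ℝ) ^ k * a j ^ (k+1) / ((k:ℝ)+1) := by
      funext k
      rw [neg_pow, pow_succ]
      ring
    rwa [heq] at h2
  have hcoshpos : (0:ℝ) < Real.cosh (x/2) := Real.cosh_pos _
  have hsumlog : Summable (fun j => Real.log (1 + a j)) := by
    refine Summable.of_nonneg_of_le (fun j => Real.log_nonneg (by linarith [ha0 j]))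
      (fun j => ?_) hsuma
    have h := Real.log_le_sub_one_of_pos (show (0:ℝ) < 1 + a j by linarith [ha0 j])
    linarith
  have hlogcosh : (∑' j, Real.log (1 + a j)) = Real.log (Real.cosh (x/2)) := by
    have h1 := hsumlog.hasSum.tendsto_sum_nat
    have h2 : Tendsto (fun n : ℕ => ∑ j ∈ Finset.range n, Real.log (1 + a j)) atTop
        (𝓝 (Real.log (Real.cosh (x/2)))) := by
      have hc := (Real.continuousAt_log hcoshpos.ne').tendsto.comp (lc_cosh_prod x)
      refine hc.congr fun n => ?_
      simp only [Function.comp_apply]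
      rw [Real.log_prod]
      intro j _
      have := ha0 j
      simp only [ha] at this ⊢
      nlinarith
    exact tendsto_nhds_unique h1 h2
  set F : ℕ → ℕ → ℝ := fun j k => (-1:ℝ) ^ k * a j ^ (k+1) / ((k:ℝ)+1) with hF
  have hFnorm : ∀ j k, ‖F j k‖ ≤ a j * a 0 ^ k := by
    intro j k
    simp only [hF, Real.norm_eq_abs, abs_div, abs_mul, abs_pow, abs_neg, abs_one, one_pow,
      one_mul, abs_of_nonneg (ha0 j)]
    have hk1 : (1:ℝ) ≤ |(k:ℝ)+1| := by
      rw [abs_of_nonneg (by positivity)]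
      linarith [Nat.cast_nonneg (α := ℝ) k]
    have h1 : a j ^ (k+1) / |(k:ℝ)+1| ≤ a j ^ (k+1) := by
      apply div_le_self (by positivity) hk1
    have h2 : a j ^ (k+1) ≤ a j * a 0 ^ k := by
      rw [pow_succ']
      exact mul_le_mul_of_nonneg_left (pow_le_pow_left₀ (ha0 j) (haj0 j) k) (ha0 j)
    linarith
  have hFsummable : Summable (Function.uncurry F) := by
    refine Summable.of_norm (Summable.of_nonneg_of_le (fun p => norm_nonneg _)
      (fun p => hFnorm p.1 p.2) ?_)
    exact hsuma.mul_of_nonneg (summable_geometric_of_lt_one (ha0 0) (ha1 0)) (fun j => ha0 j)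
      (fun k => pow_nonneg (ha0 0) k)
  calc Real.log (Real.cosh (x/2)) = ∑' j, Real.log (1 + a j) := hlogcosh.symm
  _ = ∑' (j) (k), F j k := tsum_congr fun j => ((hlogser j).tsum_eq).symm
  _ = ∑' (k) (j), F j k := (Summable.tsum_comm' hFsummable (fun j => hFsummable.prod_factor j)
      (fun k => hFsummable.prod_symm.prod_factor k)).symm
  _ = ∑' k : ℕ, (-1 : ℝ) ^ k * (∑' n : ℕ, 1 / ((n : ℝ) + 1 / 2) ^ (2 * (k + 1)))
          * x ^ (2 * (k + 1)) / ((k + 1) * (2 * Real.pi) ^ (2 * (k + 1))) := by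
    refine tsum_congr fun k => ?_
    rw [← tsum_mul_left, ← tsum_mul_right, ← tsum_div_const]
    refine tsum_congr fun j => ?_
    have key : ((j:ℝ)+1/2) ^ (2*(k+1)) * (2*Real.pi) ^ (2*(k+1))
        = (Real.pi ^ 2 * (2*(j:ℝ)+1) ^ 2) ^ (k+1) := by
      calc ((j:ℝ)+1/2) ^ (2*(k+1)) * (2*Real.pi) ^ (2*(k+1))
          = (((j:ℝ)+1/2) * (2*Real.pi)) ^ (2*(k+1)) := (mul_pow _ _ _).symm
      _ = (Real.pi * (2*(j:ℝ)+1)) ^ (2*(k+1)) := by ring_nf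
      _ = ((Real.pi * (2*(j:ℝ)+1)) ^ 2) ^ (k+1) := by rw [pow_mul]
      _ = (Real.pi ^ 2 * (2*(j:ℝ)+1) ^ 2) ^ (k+1) := by rw [mul_pow]
    have haexp : a j ^ (k+1) = x ^ (2*(k+1)) / (Real.pi ^ 2 * (2*(j:ℝ)+1) ^ 2) ^ (k+1) := by
      simp only [ha]
      rw [div_pow, ← pow_mul]
    simp only [hF]
    rw [haexp, ← key]
    generalize hq : ((j:ℝ)+1/2) ^ (2*(k+1)) = Q
    generalize hr : ((2:ℝ)*Real.pi) ^ (2*(k+1)) = R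
    have hQ0 : Q ≠ 0 := by rw [← hq]; positivity
    have hR0 : R ≠ 0 := by rw [← hr]; positivity
    have hk0 : ((k:ℝ)+1) ≠ 0 := by positivity
    field_simp
end
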